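/- arXiv:math/9604204 — 3 statements merged into one kernel-verified Lean document; each statement's English description precedes it below -/
import Mathlib

section
/- Let δ ≥ 2 be an integer and let P : ℂ² → ℂ² be the map P(z,w) = (z^δ, w^δ), whose k-th iterate is P_k(z,w) = (z^{δ^k}, w^{δ^k}). Then the functions f_k(z,w) = δ^{-k} · log(1 + |z|^{2δ^k} + |w|^{2δ^k}) converge uniformly on all of ℂ² to the function G(z,w) = max(log⁺ |z|², log⁺ |w|²) as k → ∞. -/
/-- `log⁺ r = max (log r) 0`. -/
noncomputable def logPlus (r : ℝ) : ℝ := max (Real.log r) 0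

lemma logPlus_eq (x : ℝ) (hx : 0 ≤ x) : logPlus x = Real.log (max 1 x) := by
  rcases le_total 1 x with h | h
  · rw [max_eq_right h, logPlus, max_eq_left (Real.log_nonneg h)]
  · rw [max_eq_left h, Real.log_one, logPlus, max_eq_right (Real.log_nonpos hx h)]

lemma log_max (x y : ℝ) (hx : 0 < x) (hy : 0 < y) :
    Real.log (max x y) = max (Real.log x) (Real.log y) := by
  rcases le_total x y with h | h
  · rw [max_eq_right h, max_eq_right (Real.log_le_log hx h)]
  · rw [max_eq_left h, max_eq_left (Real.log_le_log hy h)]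

lemma key (a b : ℝ) (ha : 0 ≤ a) (hb : 0 ≤ b) (n : ℕ) :
    (n : ℝ) * Real.log (max 1 (max a b)) ≤ Real.log (1 + a ^ n + b ^ n) ∧
    Real.log (1 + a ^ n + b ^ n) ≤ (n : ℝ) * Real.log (max 1 (max a b)) + Real.log 3 := by
  set m := max 1 (max a b) with hm
  have hm1 : (1 : ℝ) ≤ m := le_max_left _ _
  have hm0 : (0 : ℝ) < m := lt_of_lt_of_le one_pos hm1
  have ham : a ≤ m := le_trans (le_max_left a b) (le_max_right _ _)
  have hbm : b ≤ m := le_trans (le_max_right a b) (le_max_right _ _)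
  have han : (0:ℝ) ≤ a ^ n := pow_nonneg ha n
  have hbn : (0:ℝ) ≤ b ^ n := pow_nonneg hb n
  have hpos : (0:ℝ) < 1 + a ^ n + b ^ n := by linarith
  constructor
  · have h1 : m ^ n ≤ 1 + a ^ n + b ^ n := by
      have : m = 1 ∨ m = a ∨ m = b := by
        rcases max_cases (1:ℝ) (max a b) with ⟨h, _⟩ | ⟨h, _⟩
        · exact Or.inl h
        · rcases max_cases a b with ⟨h2, _⟩ | ⟨h2, _⟩
          · exact Or.inr (Or.inl (h.trans h2))
          · exact Or.inr (Or.inr (h.trans h2))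
      rcases this with h | h | h
      · rw [h]; simp; linarith
      · rw [h]; linarith
      · rw [h]; linarith
    calc (n : ℝ) * Real.log m = Real.log (m ^ n) := by rw [Real.log_pow]
      _ ≤ _ := Real.log_le_log (pow_pos hm0 n) h1
  · have h2 : 1 + a ^ n + b ^ n ≤ 3 * m ^ n := by
      have h1 : (1:ℝ) ≤ m ^ n := one_le_pow₀ hm1
      have hA : a ^ n ≤ m ^ n := pow_le_pow_left₀ ha ham n
      have hB : b ^ n ≤ m ^ n := pow_le_pow_left₀ hb hbm n
      linarith
    calc Real.log (1 + a ^ n + b ^ n) ≤ Real.log (3 * m ^ n) :=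
          Real.log_le_log hpos h2
      _ = Real.log 3 + (n : ℝ) * Real.log m := by
          rw [Real.log_mul (by norm_num) (ne_of_gt (pow_pos hm0 n)), Real.log_pow]
      _ = _ := by ring

/-- For `P(z,w) = (z^δ, w^δ)` with `δ ≥ 2`, the functions
`f_k(z,w) = δ^{-k} · log(1 + |z|^{2δ^k} + |w|^{2δ^k})` converge uniformly on all of `ℂ²`
to `G(z,w) = max(log⁺ |z|², log⁺ |w|²)`. -/
theorem stmt0 (δ : ℕ) (hδ : 2 ≤ δ) :
    TendstoUniformly
      (fun (k : ℕ) (p : ℂ × ℂ) =>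
        ((δ : ℝ) ^ k)⁻¹ *
          Real.log (1 + ‖p.1‖ ^ (2 * δ ^ k) + ‖p.2‖ ^ (2 * δ ^ k)))
      (fun p : ℂ × ℂ =>
        max (logPlus (‖p.1‖ ^ 2)) (logPlus (‖p.2‖ ^ 2)))
      Filter.atTop := by
  rw [Metric.tendstoUniformly_iff]
  intro ε hε
  have hδ1 : (1:ℝ) < (δ:ℝ) := by exact_mod_cast lt_of_lt_of_le one_lt_two hδ
  have htend : Filter.Tendsto (fun k : ℕ => Real.log 3 * ((δ:ℝ) ^ k)⁻¹)
      Filter.atTop (nhds 0) := by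
    have := (tendsto_pow_atTop_atTop_of_one_lt hδ1).inv_tendsto_atTop
    simpa using this.const_mul (Real.log 3)
  filter_upwards [htend.eventually (gt_mem_nhds hε)] with k hk p
  have hnpos : (0:ℝ) < (δ:ℝ) ^ k := pow_pos (by linarith) k
  set a := ‖p.1‖ ^ 2 with hadef
  set b := ‖p.2‖ ^ 2 with hbdef
  have ha : 0 ≤ a := sq_nonneg _
  have hb : 0 ≤ b := sq_nonneg _
  have hrw1 : ‖p.1‖ ^ (2 * δ ^ k) = a ^ (δ ^ k) := by
    rw [hadef, ← pow_mul]
  have hrw2 : ‖p.2‖ ^ (2 * δ ^ k) = b ^ (δ ^ k) := by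
    rw [hbdef, ← pow_mul]
  obtain ⟨h1, h2⟩ := key a b ha hb (δ ^ k)
  have hcast : ((δ ^ k : ℕ) : ℝ) = (δ:ℝ) ^ k := by push_cast; ring
  rw [hcast] at h1 h2
  have hG : max (logPlus a) (logPlus b) = Real.log (max 1 (max a b)) := by
    rw [logPlus_eq a ha, logPlus_eq b hb,
      ← log_max _ _ (lt_of_lt_of_le one_pos (le_max_left _ _))
        (lt_of_lt_of_le one_pos (le_max_left _ _))]
    congr 1
    rw [max_max_max_comm]
    simp
  simp only [hrw1, hrw2, hG]
  rw [Real.dist_eq, abs_sub_lt_iff]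
  constructor
  · have : Real.log (max 1 (max a b)) ≤ ((δ:ℝ) ^ k)⁻¹ * Real.log (1 + a ^ δ ^ k + b ^ δ ^ k) := by
      rw [le_inv_mul_iff₀ hnpos]
      linarith
    calc Real.log (max 1 (max a b)) - _ ≤ 0 := by linarith
      _ < ε := hε
  · have : ((δ:ℝ) ^ k)⁻¹ * Real.log (1 + a ^ δ ^ k + b ^ δ ^ k)
        ≤ Real.log (max 1 (max a b)) + Real.log 3 * ((δ:ℝ) ^ k)⁻¹ := by
      rw [inv_mul_le_iff₀ hnpos]
      have : (δ:ℝ) ^ k * (Real.log (max 1 (max a b)) + Real.log 3 * ((δ:ℝ) ^ k)⁻¹)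
          = (δ:ℝ) ^ k * Real.log (max 1 (max a b)) + Real.log 3 := by
        field_simp
      rw [this]
      linarith
    linarith [hk]
end

section
/- Fix a, b ∈ ℂ with a ≠ 0 and b ≠ 0, and let (d_k) and (e_k) be sequences of positive integers tending to ∞. For each k, let ν_k be the uniform probability measure on the d_k·e_k points of the set {(z,w) ∈ ℂ² : z^{d_k} = a and w^{e_k} = b}. Then ν_k converges weakly, as k → ∞, to the Haar probability measure on the torus T² = S¹ × S¹ ⊂ ℂ². -/
open MeasureTheory

/-- The Haar probability measure on the unit circle `S¹ ⊂ ℂ`, realized as the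
pushforward of Lebesgue measure on `(0,1]` under `t ↦ exp(2πit)`. -/
noncomputable def circleHaar : Measure ℂ :=
  Measure.map (fun t : ℝ => Complex.exp (2 * Real.pi * Complex.I * t))
    (volume.restrict (Set.Ioc (0 : ℝ) 1))

/-- The Haar probability measure on the torus `T² = S¹ × S¹ ⊂ ℂ²`. -/
noncomputable def torusHaar : Measure (ℂ × ℂ) := circleHaar.prod circleHaar

/-- The uniform probability measure on the `d·e` points of
`{(z,w) : z^d = a ∧ w^e = b}`. -/
noncomputable def fiberMeasure (d e : ℕ) (a b : ℂ) : Measure (ℂ × ℂ) :=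
  ((d : ENNReal) * (e : ENNReal))⁻¹ •
    (((Polynomial.nthRoots d a).bind fun z =>
        (Polynomial.nthRoots e b).map fun w => ((z, w) : ℂ × ℂ)).map Measure.dirac).sum

noncomputable def Emap (t : ℝ) : ℂ := Complex.exp (2 * Real.pi * Complex.I * t)

lemma continuous_Emap : Continuous Emap :=
  Complex.continuous_exp.comp (continuous_const.mul Complex.continuous_ofReal)

lemma abs_Emap (t : ℝ) : ‖Emap t‖ = 1 := by
  simp [Emap, Complex.norm_exp]


lemma nthRoots_explicit (n : ℕ) (hn : 1 ≤ n) (a : ℂ) (ha : a ≠ 0) :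
    Polynomial.nthRoots n a = (Multiset.range n).map
      (fun j : ℕ => (Real.exp (Real.log ‖a‖ / n) : ℂ) *
        Emap (((j : ℝ) + Complex.arg a / (2*Real.pi)) / n)) := by
  have hn0 : n ≠ 0 := by omega
  have hζ := Complex.isPrimitiveRoot_exp n hn0
  have hα : Complex.exp (Complex.log a / n) ^ n = a := by
    rw [← Complex.exp_nat_mul, mul_div_cancel₀ _ (Nat.cast_ne_zero.2 hn0 : (n:ℂ) ≠ 0),
      Complex.exp_log ha]
  rw [hζ.nthRoots_eq hα]
  apply Multiset.map_congr rfl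
  intro j hj
  show Complex.exp (2 * Real.pi * Complex.I / n) ^ j * Complex.exp (Complex.log a / n) = _
  rw [← Complex.exp_nat_mul, ← Complex.exp_add]
  rw [Emap, Complex.ofReal_exp, ← Complex.exp_add]
  congr 1
  rw [Complex.log]
  have hπ : (Real.pi : ℂ) ≠ 0 := by
    exact_mod_cast Real.pi_ne_zero
  have hnC : (n : ℂ) ≠ 0 := Nat.cast_ne_zero.2 hn0
  push_cast
  field_simp
  ring


lemma dirac_multiset_sum_univ {α : Type*} [MeasurableSpace α] (s : Multiset α) :
    ((s.map Measure.dirac).sum) Set.univ = s.card := by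
  induction s using Multiset.induction_on with
  | empty => simp
  | cons x t ih =>
      simp [Measure.add_apply, ih, add_comm]

lemma integral_dirac_multiset_sum {α : Type*} [MeasurableSpace α] [TopologicalSpace α]
    [BorelSpace α] [T2Space α] (s : Multiset α) (f : BoundedContinuousFunction α ℝ) :
    ∫ p, f p ∂((s.map Measure.dirac).sum) = (s.map f).sum := by
  induction s using Multiset.induction_on with
  | empty => simp
  | cons x t ih =>
      haveI : IsFiniteMeasure ((t.map Measure.dirac).sum) :=
        ⟨by rw [dirac_multiset_sum_univ]; exact ENNReal.natCast_lt_top _⟩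
      rw [Multiset.map_cons, Multiset.sum_cons,
        integral_add_measure (f.integrable (μ := Measure.dirac x))
          (f.integrable (μ := (t.map Measure.dirac).sum)),
        Multiset.map_cons, Multiset.sum_cons, ih, integral_dirac]

lemma integral_fiber (d e : ℕ) (hd : 1 ≤ d) (he : 1 ≤ e) (a b : ℂ) (ha : a ≠ 0) (hb : b ≠ 0)
    (f : BoundedContinuousFunction (ℂ × ℂ) ℝ) :
    ∫ p, f p ∂(fiberMeasure d e a b) =
      (((d : ℝ) * e)⁻¹) * ∑ j ∈ Finset.range d, ∑ l ∈ Finset.range e,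
        f ((Real.exp (Real.log ‖a‖ / d) : ℂ) *
             Emap (((j : ℝ) + Complex.arg a / (2*Real.pi)) / d),
           (Real.exp (Real.log ‖b‖ / e) : ℂ) *
             Emap (((l : ℝ) + Complex.arg b / (2*Real.pi)) / e)) := by
  rw [fiberMeasure, integral_smul_measure, integral_dirac_multiset_sum,
    nthRoots_explicit d hd a ha, nthRoots_explicit e he b hb]
  rw [Multiset.map_bind, Multiset.sum_bind]
  simp only [Multiset.map_map, Function.comp]
  rw [smul_eq_mul]
  have h1 : ((d : ENNReal) * e)⁻¹.toReal = (((d:ℝ)) * e)⁻¹ := by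
    simp [ENNReal.toReal_inv]
  rw [h1]
  simp only [Finset.sum_eq_multiset_sum, Finset.range_val]




lemma restrictIoc_finite : IsFiniteMeasure (volume.restrict (Set.Ioc (0:ℝ) 1)) :=
  ⟨by simp [Real.volume_Ioc]⟩

lemma integral_torus (f : BoundedContinuousFunction (ℂ × ℂ) ℝ) :
    ∫ p, f p ∂torusHaar
      = ∫ s in Set.Ioc (0:ℝ) 1, ∫ t in Set.Ioc (0:ℝ) 1, f (Emap s, Emap t) := by
  haveI := restrictIoc_finite
  haveI : IsFiniteMeasure ((volume.restrict (Set.Ioc (0:ℝ) 1)).prod (volume.restrict (Set.Ioc (0:ℝ) 1))) := by infer_instance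
  have hE : Measurable Emap := continuous_Emap.measurable
  have h1 : torusHaar = Measure.map (Prod.map Emap Emap)
      ((volume.restrict (Set.Ioc (0:ℝ) 1)).prod (volume.restrict (Set.Ioc (0:ℝ) 1))) := by
    rw [torusHaar, circleHaar]
    exact Measure.map_prod_map _ _ hE hE
  rw [h1, integral_map (hE.prodMap hE).aemeasurable f.continuous.aestronglyMeasurable]
  have hint : Integrable (fun p : ℝ × ℝ => f (Emap p.1, Emap p.2))
      ((volume.restrict (Set.Ioc (0:ℝ) 1)).prod (volume.restrict (Set.Ioc (0:ℝ) 1))) :=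
    (f.compContinuous ⟨fun p : ℝ × ℝ => (Emap p.1, Emap p.2),
      (continuous_Emap.comp continuous_fst).prodMk
        (continuous_Emap.comp continuous_snd)⟩).integrable _
  simpa [Prod.map] using integral_prod _ hint

lemma riemann (h : ℝ → ℝ) (hc : Continuous h) (d : ℕ) (hd : 1 ≤ d) (θ : ℝ)
    (hθ : θ ∈ Set.Icc (-1:ℝ) 1) (ε : ℝ)
    (hmod : ∀ x ∈ Set.Icc (-1:ℝ) 2, ∀ y ∈ Set.Icc (-1:ℝ) 2, |x - y| ≤ 2/d → |h x - h y| ≤ ε) :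
    |(∑ j ∈ Finset.range d, h ((j + θ)/d)) / d - ∫ t in Set.Ioc (0:ℝ) 1, h t| ≤ ε := by
  have hd0 : (0:ℝ) < d := by exact_mod_cast hd
  have hε : 0 ≤ ε := by
    have := hmod 0 (by norm_num) 0 (by norm_num) (by rw [sub_self, abs_zero]; positivity)
    simpa using this
  set A : ℕ → ℝ := fun j => j / d with hA
  have hmono : ∀ j, A j ≤ A (j+1) := fun j =>
    (div_le_div_iff_of_pos_right hd0).mpr (by push_cast; linarith)
  have hsplit : ∫ t in Set.Ioc (0:ℝ) 1, h t
      = ∑ j ∈ Finset.range d, ∫ x in (A j)..(A (j+1)), h x := by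
    rw [intervalIntegral.sum_integral_adjacent_intervals
      (fun j _ => hc.intervalIntegrable _ _)]
    have h0 : A 0 = 0 := by simp [hA]
    have h1 : A d = 1 := by show (d:ℝ)/d = 1; exact div_self hd0.ne'
    rw [h0, h1, intervalIntegral.integral_of_le (by norm_num)]
  rw [hsplit, Finset.sum_div, ← Finset.sum_sub_distrib]
  refine (Finset.abs_sum_le_sum_abs _ _).trans ?_
  have key : ∀ j ∈ Finset.range d,
      |h ((j + θ)/d) / d - ∫ x in (A j)..(A (j+1)), h x| ≤ ε / d := by
    intro j hj
    have hjd : (j:ℝ) < d := by exact_mod_cast Finset.mem_range.mp hj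
    have hjd' : ((j:ℝ) + 1) ≤ d := by exact_mod_cast Nat.succ_le_of_lt (Finset.mem_range.mp hj)
    have hj0 : (0:ℝ) ≤ j := Nat.cast_nonneg j
    have hd1 : (1:ℝ) ≤ d := by exact_mod_cast hd
    have hAle : A j ≤ A (j+1) := hmono j
    have hAj0 : (0:ℝ) ≤ A j := by positivity
    have hA1 : A (j+1) ≤ 1 := by
      rw [hA]
      apply div_le_one_of_le₀ _ hd0.le
      push_cast; linarith
    have hconst : h ((j + θ)/d) / d = ∫ _x in (A j)..(A (j+1)), h ((j + θ)/d) := by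
      rw [intervalIntegral.integral_const, smul_eq_mul, hA]
      push_cast
      field_simp
      ring
    have hθ1 := hθ.1; have hθ2 := hθ.2
    have hbound : ∀ x ∈ Set.uIoc (A j) (A (j+1)),
        ‖h ((j + θ)/d) - h x‖ ≤ ε := by
      intro x hx
      rw [Set.uIoc_of_le hAle] at hx
      have hx1 : A j < x := hx.1
      have hx2 : x ≤ A (j+1) := hx.2
      have htj1 : ((j:ℝ) + θ)/d ∈ Set.Icc (-1:ℝ) 2 := by
        constructor
        · rw [le_div_iff₀ hd0]; nlinarith
        · rw [div_le_iff₀ hd0]; nlinarith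
      have hxI : x ∈ Set.Icc (-1:ℝ) 2 := ⟨by linarith, by linarith⟩
      have hxd1 : (j:ℝ) < x * d := by
        have := (div_lt_iff₀ hd0).mp hx1
        linarith
      have hxd2 : x * d ≤ (j:ℝ) + 1 := by
        have := (le_div_iff₀ hd0).mp hx2
        push_cast at this ⊢
        linarith
      have hrepr : ((j:ℝ) + θ)/d - x = (((j:ℝ) + θ) - x * d)/d := by
        field_simp
      have hdist : |((j:ℝ) + θ)/d - x| ≤ 2/d := by
        rw [hrepr, abs_div, abs_of_pos hd0]
        gcongr
        rw [abs_le]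
        constructor <;> linarith
      simpa [Real.norm_eq_abs] using hmod _ htj1 _ hxI hdist
    have hnorm := intervalIntegral.norm_integral_le_of_norm_le_const hbound
    rw [hconst, ← intervalIntegral.integral_sub intervalIntegrable_const
      (hc.intervalIntegrable _ _)]
    calc |∫ x in (A j)..(A (j+1)), (h ((j + θ)/d) - h x)|
        ≤ ε * |A (j+1) - A j| := hnorm
      _ = ε / d := by
          rw [abs_of_nonneg (sub_nonneg.mpr hAle), hA]
          push_cast
          field_simp
          ring
  calc ∑ j ∈ Finset.range d, |h ((j + θ)/d) / d - ∫ x in (A j)..(A (j+1)), h x|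
      ≤ ∑ _j ∈ Finset.range d, ε / d := Finset.sum_le_sum key
    _ = ε := by
        rw [Finset.sum_const, Finset.card_range, nsmul_eq_mul]
        field_simp
lemma riemann2 (g : ℝ → ℝ → ℝ) (hg : Continuous fun p : ℝ × ℝ => g p.1 p.2)
    (d e : ℕ) (hd : 1 ≤ d) (he : 1 ≤ e) (θ φ : ℝ)
    (hθ : θ ∈ Set.Icc (-1:ℝ) 1) (hφ : φ ∈ Set.Icc (-1:ℝ) 1) (ε : ℝ)
    (hmod1 : ∀ s ∈ Set.Icc (-1:ℝ) 2, ∀ x ∈ Set.Icc (-1:ℝ) 2, ∀ y ∈ Set.Icc (-1:ℝ) 2,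
      |x - y| ≤ 2/e → |g s x - g s y| ≤ ε)
    (hmod2 : ∀ x ∈ Set.Icc (-1:ℝ) 2, ∀ y ∈ Set.Icc (-1:ℝ) 2, |x - y| ≤ 2/d →
      ∀ t ∈ Set.Icc (-1:ℝ) 2, |g x t - g y t| ≤ ε) :
    |(∑ j ∈ Finset.range d, ∑ l ∈ Finset.range e, g ((j + θ)/d) ((l + φ)/e)) / (d * e)
      - ∫ s in Set.Ioc (0:ℝ) 1, ∫ t in Set.Ioc (0:ℝ) 1, g s t| ≤ 2 * ε := by
  have hd0 : (0:ℝ) < d := by exact_mod_cast hd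
  have he0 : (0:ℝ) < e := by exact_mod_cast he
  haveI : IsFiniteMeasure (volume.restrict (Set.Ioc (0:ℝ) 1)) :=
    ⟨by simp [Real.volume_Ioc]⟩
  set h : ℝ → ℝ := fun s => ∫ t in Set.Ioc (0:ℝ) 1, g s t with hh
  have hgs : ∀ s, Continuous (g s) := fun s =>
    hg.comp (Continuous.prodMk_right s)
  have hcont_h : Continuous h := by
    have heq : h = fun s => ∫ t in Set.Icc (0:ℝ) 1, g s t := by
      funext s
      rw [hh, integral_Icc_eq_integral_Ioc]
    rw [heq]
    exact continuous_parametric_integral_of_continuous hg isCompact_Icc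
  have hmod_h : ∀ x ∈ Set.Icc (-1:ℝ) 2, ∀ y ∈ Set.Icc (-1:ℝ) 2, |x - y| ≤ 2/d →
      |h x - h y| ≤ ε := by
    intro x hx y hy hxy
    have hintx : IntegrableOn (g x) (Set.Ioc (0:ℝ) 1) volume :=
      (hgs x).integrableOn_Ioc
    have hinty : IntegrableOn (g y) (Set.Ioc (0:ℝ) 1) volume :=
      (hgs y).integrableOn_Ioc
    have hsub : h x - h y = ∫ t in Set.Ioc (0:ℝ) 1, (g x t - g y t) :=
      (integral_sub hintx hinty).symm
    rw [hsub]
    have := norm_integral_le_of_norm_le_const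
      (μ := volume.restrict (Set.Ioc (0:ℝ) 1)) (C := ε)
      (f := fun t => g x t - g y t) ?_
    · calc |∫ t in Set.Ioc (0:ℝ) 1, (g x t - g y t)|
          ≤ ε * ((volume.restrict (Set.Ioc (0:ℝ) 1)) Set.univ).toReal := this
        _ = ε := by simp [Measure.restrict_apply, Real.volume_Ioc]
    · rw [ae_restrict_iff' measurableSet_Ioc]
      refine ae_of_all _ fun t ht => ?_
      have htI : t ∈ Set.Icc (-1:ℝ) 2 := ⟨by linarith [ht.1], by linarith [ht.2]⟩
      simpa [Real.norm_eq_abs] using hmod2 x hx y hy hxy t htI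
  have houter := riemann h hcont_h d hd θ hθ ε hmod_h
  have hinner : ∀ j ∈ Finset.range d,
      |(∑ l ∈ Finset.range e, g ((j + θ)/d) ((l + φ)/e)) / e - h ((j + θ)/d)| ≤ ε := by
    intro j hj
    have hjd' : ((j:ℝ) + 1) ≤ d := by exact_mod_cast Nat.succ_le_of_lt (Finset.mem_range.mp hj)
    have hj0 : (0:ℝ) ≤ j := Nat.cast_nonneg j
    have hd1 : (1:ℝ) ≤ d := by exact_mod_cast hd
    have htj : ((j:ℝ) + θ)/d ∈ Set.Icc (-1:ℝ) 2 := by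
      constructor
      · rw [le_div_iff₀ hd0]; nlinarith [hθ.1]
      · rw [div_le_iff₀ hd0]; nlinarith [hθ.2]
    exact riemann (g (((j:ℝ) + θ)/d)) (hgs _) e he φ hφ ε (hmod1 _ htj)
  -- algebra
  have hsum : (∑ j ∈ Finset.range d, ∑ l ∈ Finset.range e, g ((j + θ)/d) ((l + φ)/e)) / (d * e)
      = (∑ j ∈ Finset.range d, (∑ l ∈ Finset.range e, g ((j + θ)/d) ((l + φ)/e)) / e) / d := by
    rw [← Finset.sum_div, div_div, mul_comm (e:ℝ) d]
  rw [hsum]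
  have step1 : |(∑ j ∈ Finset.range d, (∑ l ∈ Finset.range e, g ((j + θ)/d) ((l + φ)/e)) / e) / d
      - (∑ j ∈ Finset.range d, h ((j + θ)/d)) / d| ≤ ε := by
    rw [div_sub_div_same, ← Finset.sum_sub_distrib, abs_div, abs_of_pos hd0, div_le_iff₀ hd0]
    calc |∑ j ∈ Finset.range d, ((∑ l ∈ Finset.range e, g ((j + θ)/d) ((l + φ)/e)) / e
            - h ((j + θ)/d))|
        ≤ ∑ j ∈ Finset.range d, |(∑ l ∈ Finset.range e, g ((j + θ)/d) ((l + φ)/e)) / e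
            - h ((j + θ)/d)| := Finset.abs_sum_le_sum_abs _ _
      _ ≤ ∑ _j ∈ Finset.range d, ε := Finset.sum_le_sum hinner
      _ = ε * d := by rw [Finset.sum_const, Finset.card_range, nsmul_eq_mul]; ring
  calc |(∑ j ∈ Finset.range d, (∑ l ∈ Finset.range e, g ((j + θ)/d) ((l + φ)/e)) / e) / d
      - ∫ s in Set.Ioc (0:ℝ) 1, ∫ t in Set.Ioc (0:ℝ) 1, g s t|
      ≤ |(∑ j ∈ Finset.range d, (∑ l ∈ Finset.range e, g ((j + θ)/d) ((l + φ)/e)) / e) / d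
          - (∑ j ∈ Finset.range d, h ((j + θ)/d)) / d|
        + |(∑ j ∈ Finset.range d, h ((j + θ)/d)) / d
          - ∫ s in Set.Ioc (0:ℝ) 1, ∫ t in Set.Ioc (0:ℝ) 1, g s t| := abs_sub_le _ _ _
    _ ≤ ε + ε := add_le_add step1 houter
    _ = 2 * ε := by ring
/-- For fixed `a, b ≠ 0` and sequences of positive integers `d_k, e_k → ∞`, the uniform
probability measures on `{(z,w) : z^{d_k} = a, w^{e_k} = b}` converge weakly to the Haar
probability measure on the torus `T² ⊂ ℂ²`. -/
theorem stmt5 (a b : ℂ) (ha : a ≠ 0) (hb : b ≠ 0) (d e : ℕ → ℕ)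
    (hd1 : ∀ k, 1 ≤ d k) (he1 : ∀ k, 1 ≤ e k)
    (hd : Filter.Tendsto d Filter.atTop Filter.atTop)
    (he : Filter.Tendsto e Filter.atTop Filter.atTop) :
    ∀ f : BoundedContinuousFunction (ℂ × ℂ) ℝ,
      Filter.Tendsto (fun k : ℕ => ∫ p, f p ∂(fiberMeasure (d k) (e k) a b))
        Filter.atTop (nhds (∫ p, f p ∂torusHaar)) := by
  intro f
  rw [integral_torus f]
  rw [Metric.tendsto_nhds]
  intro ε hε
  set ε' := ε / 4 with hε'
  have hε'0 : 0 < ε' := by positivity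
  -- uniform continuity of f on K
  set K : Set (ℂ × ℂ) := (Metric.closedBall (0:ℂ) 2) ×ˢ (Metric.closedBall (0:ℂ) 2) with hK
  have hKcompact : IsCompact K :=
    (isCompact_closedBall _ _).prod (isCompact_closedBall _ _)
  obtain ⟨δ₁, hδ₁0, hδ₁⟩ := Metric.uniformContinuousOn_iff.mp
    (hKcompact.uniformContinuousOn_of_continuous f.continuous.continuousOn) ε' hε'0
  -- the torus parametrization and its uniform continuity
  set g : ℝ → ℝ → ℝ := fun s t => f (Emap s, Emap t) with hg
  have hgc : Continuous fun p : ℝ × ℝ => g p.1 p.2 :=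
    f.continuous.comp ((continuous_Emap.comp continuous_fst).prodMk
      (continuous_Emap.comp continuous_snd))
  have hBoxCompact : IsCompact (Set.Icc ((-1,-1) : ℝ × ℝ) (2,2)) := isCompact_Icc
  obtain ⟨δ₂, hδ₂0, hδ₂⟩ := Metric.uniformContinuousOn_iff.mp
    (hBoxCompact.uniformContinuousOn_of_continuous hgc.continuousOn) ε' hε'0
  -- angles
  set θa : ℝ := Complex.arg a / (2 * Real.pi) with hθa
  set θb : ℝ := Complex.arg b / (2 * Real.pi) with hθb
  have hπ := Real.pi_pos
  have hangle : ∀ z : ℂ, Complex.arg z / (2 * Real.pi) ∈ Set.Icc (-1:ℝ) 1 := by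
    intro z
    have h1 := Complex.abs_arg_le_pi z
    rw [abs_le] at h1
    constructor
    · rw [le_div_iff₀ (by positivity)]; nlinarith [h1.1]
    · rw [div_le_iff₀ (by positivity)]; nlinarith [h1.2]
  -- eventual conditions
  have hdR : Filter.Tendsto (fun k => (d k : ℝ)) Filter.atTop Filter.atTop :=
    tendsto_natCast_atTop_atTop.comp hd
  have heR : Filter.Tendsto (fun k => (e k : ℝ)) Filter.atTop Filter.atTop :=
    tendsto_natCast_atTop_atTop.comp he
  have hmesh_d : ∀ᶠ k in Filter.atTop, (2:ℝ) / d k < δ₂ :=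
    (tendsto_const_nhds.div_atTop hdR).eventually (gt_mem_nhds hδ₂0)
  have hmesh_e : ∀ᶠ k in Filter.atTop, (2:ℝ) / e k < δ₂ :=
    (tendsto_const_nhds.div_atTop heR).eventually (gt_mem_nhds hδ₂0)
  have hrad : ∀ (c : ℝ) (n : ℕ → ℕ), Filter.Tendsto (fun k => (n k : ℝ)) Filter.atTop Filter.atTop →
      Filter.Tendsto (fun k => Real.exp (c / n k)) Filter.atTop (nhds 1) := by
    intro c n hn
    have h0 : Filter.Tendsto (fun k => c / (n k : ℝ)) Filter.atTop (nhds 0) :=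
      tendsto_const_nhds.div_atTop hn
    simpa [Function.comp_def] using (Real.continuous_exp.tendsto 0).comp h0
  have hρ : ∀ᶠ k in Filter.atTop,
      |Real.exp (Real.log ‖a‖ / d k) - 1| < min δ₁ 1 :=
    ((hrad _ d hdR).eventually (Metric.ball_mem_nhds 1 (lt_min hδ₁0 one_pos))).mono
      (fun k hk => by simpa [Real.dist_eq] using hk)
  have hσ : ∀ᶠ k in Filter.atTop,
      |Real.exp (Real.log ‖b‖ / e k) - 1| < min δ₁ 1 :=
    ((hrad _ e heR).eventually (Metric.ball_mem_nhds 1 (lt_min hδ₁0 one_pos))).mono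
      (fun k hk => by simpa [Real.dist_eq] using hk)
  filter_upwards [hmesh_d, hmesh_e, hρ, hσ] with k hk1 hk2 hk3 hk4
  set D := d k with hD
  set E := e k with hE
  have hD1 : 1 ≤ D := hd1 k
  have hE1 : 1 ≤ E := he1 k
  have hD0 : (0:ℝ) < D := by exact_mod_cast hD1
  have hE0 : (0:ℝ) < E := by exact_mod_cast hE1
  set ρ : ℝ := Real.exp (Real.log ‖a‖ / D) with hρdef
  set σ : ℝ := Real.exp (Real.log ‖b‖ / E) with hσdef
  have hρ2 : ρ ≤ 2 := by
    have := (abs_lt.mp hk3).2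
    have h2 := min_le_right δ₁ 1
    linarith [min_le_right δ₁ (1:ℝ)]
  have hσ2 : σ ≤ 2 := by
    have := (abs_lt.mp hk4).2
    linarith [min_le_right δ₁ (1:ℝ)]
  -- the sums
  rw [integral_fiber D E hD1 hE1 a b ha hb f]
  -- termwise comparison
  have hterm : ∀ s t : ℝ,
      |f ((ρ:ℂ) * Emap s, (σ:ℂ) * Emap t) - g s t| ≤ ε' := by
    intro s t
    have habs1 : ‖(ρ:ℂ) * Emap s‖ = ρ := by
      rw [norm_mul, abs_Emap, Complex.norm_real, Real.norm_eq_abs, mul_one, abs_of_pos (Real.exp_pos _)]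
    have habs2 : ‖(σ:ℂ) * Emap t‖ = σ := by
      rw [norm_mul, abs_Emap, Complex.norm_real, Real.norm_eq_abs, mul_one, abs_of_pos (Real.exp_pos _)]
    have hmemp : ((ρ:ℂ) * Emap s, (σ:ℂ) * Emap t) ∈ K := by
      constructor <;> simp only [Metric.mem_closedBall, Complex.dist_eq, sub_zero]
      · rw [habs1]; exact hρ2
      · rw [habs2]; exact hσ2
    have hmemq : ((Emap s : ℂ), (Emap t : ℂ)) ∈ K := by
      constructor <;> simp only [Metric.mem_closedBall, Complex.dist_eq, sub_zero]
      · rw [abs_Emap]; norm_num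
      · rw [abs_Emap]; norm_num
    have hd1' : dist ((ρ:ℂ) * Emap s) (Emap s) = |ρ - 1| := by
      rw [Complex.dist_eq]
      have : (ρ:ℂ) * Emap s - Emap s = ((ρ - 1 : ℝ) : ℂ) * Emap s := by push_cast; ring
      rw [this, norm_mul, abs_Emap, Complex.norm_real, Real.norm_eq_abs, mul_one]
    have hd2' : dist ((σ:ℂ) * Emap t) (Emap t) = |σ - 1| := by
      rw [Complex.dist_eq]
      have : (σ:ℂ) * Emap t - Emap t = ((σ - 1 : ℝ) : ℂ) * Emap t := by push_cast; ring
      rw [this, norm_mul, abs_Emap, Complex.norm_real, Real.norm_eq_abs, mul_one]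
    have hdist : dist (((ρ:ℂ) * Emap s, (σ:ℂ) * Emap t)) ((Emap s, Emap t)) < δ₁ := by
      rw [Prod.dist_eq]
      apply max_lt
      · rw [hd1']; exact lt_of_lt_of_le hk3 (min_le_left _ _)
      · rw [hd2']; exact lt_of_lt_of_le hk4 (min_le_left _ _)
    have := hδ₁ _ hmemp _ hmemq hdist
    rw [Real.dist_eq] at this
    exact le_of_lt this
  -- modulus for riemann2
  have hmod1 : ∀ s ∈ Set.Icc (-1:ℝ) 2, ∀ x ∈ Set.Icc (-1:ℝ) 2, ∀ y ∈ Set.Icc (-1:ℝ) 2,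
      |x - y| ≤ 2 / E → |g s x - g s y| ≤ ε' := by
    intro s hs x hx y hy hxy
    have hp : ((s, x) : ℝ × ℝ) ∈ Set.Icc ((-1,-1) : ℝ × ℝ) (2,2) :=
      ⟨⟨hs.1, hx.1⟩, ⟨hs.2, hx.2⟩⟩
    have hq : ((s, y) : ℝ × ℝ) ∈ Set.Icc ((-1,-1) : ℝ × ℝ) (2,2) :=
      ⟨⟨hs.1, hy.1⟩, ⟨hs.2, hy.2⟩⟩
    have hdist : dist ((s,x) : ℝ × ℝ) ((s,y) : ℝ × ℝ) < δ₂ := by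
      rw [Prod.dist_eq]
      apply max_lt
      · simpa using hδ₂0
      · rw [Real.dist_eq]; exact lt_of_le_of_lt hxy hk2
    have := hδ₂ _ hp _ hq hdist
    rw [Real.dist_eq] at this
    exact le_of_lt this
  have hmod2 : ∀ x ∈ Set.Icc (-1:ℝ) 2, ∀ y ∈ Set.Icc (-1:ℝ) 2, |x - y| ≤ 2 / D →
      ∀ t ∈ Set.Icc (-1:ℝ) 2, |g x t - g y t| ≤ ε' := by
    intro x hx y hy hxy t ht
    have hp : ((x, t) : ℝ × ℝ) ∈ Set.Icc ((-1,-1) : ℝ × ℝ) (2,2) :=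
      ⟨⟨hx.1, ht.1⟩, ⟨hx.2, ht.2⟩⟩
    have hq : ((y, t) : ℝ × ℝ) ∈ Set.Icc ((-1,-1) : ℝ × ℝ) (2,2) :=
      ⟨⟨hy.1, ht.1⟩, ⟨hy.2, ht.2⟩⟩
    have hdist : dist ((x,t) : ℝ × ℝ) ((y,t) : ℝ × ℝ) < δ₂ := by
      rw [Prod.dist_eq]
      apply max_lt
      · rw [Real.dist_eq]; exact lt_of_le_of_lt hxy hk1
      · simpa using hδ₂0
    have := hδ₂ _ hp _ hq hdist
    rw [Real.dist_eq] at this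
    exact le_of_lt this
  have hR := riemann2 g hgc D E hD1 hE1 θa θb (hangle a) (hangle b) ε' hmod1 hmod2
  -- now the distance estimate
  set S : ℝ := (((D:ℝ) * E)⁻¹) * ∑ j ∈ Finset.range D, ∑ l ∈ Finset.range E,
      f ((ρ:ℂ) * Emap (((j:ℝ) + θa) / D), (σ:ℂ) * Emap (((l:ℝ) + θb) / E)) with hS
  set R : ℝ := (∑ j ∈ Finset.range D, ∑ l ∈ Finset.range E,
      g (((j:ℝ) + θa) / D) (((l:ℝ) + θb) / E)) / ((D:ℝ) * E) with hRdef
  have hSR : |S - R| ≤ ε' := by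
    have : S - R = (((D:ℝ) * E)⁻¹) * ∑ j ∈ Finset.range D, ∑ l ∈ Finset.range E,
        (f ((ρ:ℂ) * Emap (((j:ℝ) + θa) / D), (σ:ℂ) * Emap (((l:ℝ) + θb) / E))
          - g (((j:ℝ) + θa) / D) (((l:ℝ) + θb) / E)) := by
      rw [hS, hRdef, div_eq_inv_mul, ← mul_sub]
      congr 1
      rw [← Finset.sum_sub_distrib]
      congr 1
      funext j
      rw [← Finset.sum_sub_distrib]
    rw [this, abs_mul, abs_of_pos (by positivity : (0:ℝ) < ((D:ℝ) * E)⁻¹)]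
    have hsum_bound : |∑ j ∈ Finset.range D, ∑ l ∈ Finset.range E,
        (f ((ρ:ℂ) * Emap (((j:ℝ) + θa) / D), (σ:ℂ) * Emap (((l:ℝ) + θb) / E))
          - g (((j:ℝ) + θa) / D) (((l:ℝ) + θb) / E))| ≤ (D:ℝ) * E * ε' := by
      refine (Finset.abs_sum_le_sum_abs _ _).trans ?_
      calc ∑ j ∈ Finset.range D, |∑ l ∈ Finset.range E, _|
          ≤ ∑ j ∈ Finset.range D, ∑ l ∈ Finset.range E,
            |f ((ρ:ℂ) * Emap (((j:ℝ) + θa) / D), (σ:ℂ) * Emap (((l:ℝ) + θb) / E))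
              - g (((j:ℝ) + θa) / D) (((l:ℝ) + θb) / E)| :=
            Finset.sum_le_sum fun j _ => Finset.abs_sum_le_sum_abs _ _
        _ ≤ ∑ _j ∈ Finset.range D, ∑ _l ∈ Finset.range E, ε' :=
            Finset.sum_le_sum fun j _ => Finset.sum_le_sum fun l _ => hterm _ _
        _ = (D:ℝ) * E * ε' := by
            simp [Finset.sum_const, Finset.card_range, nsmul_eq_mul]; ring
    calc ((D:ℝ) * E)⁻¹ * |∑ j ∈ Finset.range D, ∑ l ∈ Finset.range E, _|
        ≤ ((D:ℝ) * E)⁻¹ * ((D:ℝ) * E * ε') := by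
          apply mul_le_mul_of_nonneg_left hsum_bound (by positivity)
      _ = ε' := by field_simp
  calc dist S (∫ s in Set.Ioc (0:ℝ) 1, ∫ t in Set.Ioc (0:ℝ) 1, f (Emap s, Emap t))
      = |S - ∫ s in Set.Ioc (0:ℝ) 1, ∫ t in Set.Ioc (0:ℝ) 1, g s t| := by
        rw [Real.dist_eq, hg]
    _ ≤ |S - R| + |R - ∫ s in Set.Ioc (0:ℝ) 1, ∫ t in Set.Ioc (0:ℝ) 1, g s t| :=
        abs_sub_le _ _ _
    _ ≤ ε' + 2 * ε' := add_le_add hSR hR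
    _ < ε := by rw [hε']; linarith
end

section
/- For each integer k ≥ 0, let h_k(z,w) = (3·6^k)^{-1} · log(1 + |w|^{6·6^k} + |z|^{4·6^k}). Then h_k converges uniformly on all of ℂ², as k → ∞, to the function g₂(z,w) = max(log⁺ |w|², (2/3)·log⁺ |z|²) = log⁺(max(|w|², |z|^{4/3})). -/
lemma lp_mono {x y : ℝ} (hx : 0 ≤ x) (hxy : x ≤ y) : logPlus x ≤ logPlus y := by
  unfold logPlus
  rcases eq_or_lt_of_le hx with h | h
  · simp [← h, Real.log_zero]
  · exact max_le_max (Real.log_le_log h hxy) le_rfl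

lemma lp_max {x y : ℝ} (hx : 0 ≤ x) (hy : 0 ≤ y) :
    logPlus (max x y) = max (logPlus x) (logPlus y) := by
  rcases le_total x y with h | h
  · rw [max_eq_right h, max_eq_right (lp_mono hx h)]
  · rw [max_eq_left h, max_eq_left (lp_mono hy h)]

lemma lp_pow (a : ℝ) (m : ℕ) : logPlus (a ^ m) = m * logPlus a := by
  unfold logPlus
  rw [Real.log_pow, mul_max_of_nonneg _ _ (by positivity : (0:ℝ) ≤ (m:ℝ)), mul_zero]

lemma lp_rpow {b t : ℝ} (hb : 0 ≤ b) (ht : 0 < t) : logPlus (b ^ t) = t * logPlus b := by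
  rcases eq_or_lt_of_le hb with h | h
  · rw [← h, Real.zero_rpow (ne_of_gt ht)]
    unfold logPlus
    simp [Real.log_zero]
  · unfold logPlus
    rw [Real.log_rpow h, mul_max_of_nonneg _ _ ht.le, mul_zero]

lemma lp_eq_log_max {r : ℝ} (hr : 0 ≤ r) : logPlus r = Real.log (max 1 r) := by
  rcases le_total r 1 with h | h
  · rw [max_eq_left h, Real.log_one]
    unfold logPlus
    rw [max_eq_right (Real.log_nonpos hr h)]
  · rw [max_eq_right h]
    unfold logPlus
    rw [max_eq_left (Real.log_nonneg h)]

/-- The functions `h_k(z,w) = (3·6^k)⁻¹ · log(1 + |w|^{6·6^k} + |z|^{4·6^k})` converge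
uniformly on all of `ℂ²` to
`g₂(z,w) = max(log⁺ |w|², (2/3)·log⁺ |z|²) = log⁺(max(|w|², |z|^{4/3}))`. -/
theorem stmt11 :
    (∀ z w : ℂ,
      max (logPlus (‖w‖ ^ 2)) (2 / 3 * logPlus (‖z‖ ^ 2)) =
        logPlus (max (‖w‖ ^ 2) (‖z‖ ^ ((4 : ℝ) / 3)))) ∧
    TendstoUniformly
      (fun (k : ℕ) (p : ℂ × ℂ) =>
        ((3 : ℝ) * 6 ^ k)⁻¹ *
          Real.log (1 + ‖p.2‖ ^ (6 * 6 ^ k) + ‖p.1‖ ^ (4 * 6 ^ k)))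
      (fun p : ℂ × ℂ =>
        max (logPlus (‖p.2‖ ^ 2)) (2 / 3 * logPlus (‖p.1‖ ^ 2)))
      Filter.atTop := by
  constructor
  · intro z w
    rw [lp_max (by positivity) (Real.rpow_nonneg (norm_nonneg z) _)]
    congr 1
    rw [lp_rpow (norm_nonneg z) (by norm_num : (0:ℝ) < 4/3), lp_pow]
    push_cast
    ring
  · rw [Metric.tendstoUniformly_iff]
    intro ε hε
    have h1 : Filter.Tendsto (fun k : ℕ => ((3:ℝ) * 6 ^ k)) Filter.atTop Filter.atTop := by
      exact (tendsto_pow_atTop_atTop_of_one_lt (by norm_num : (1:ℝ) < 6)).const_mul_atTop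
        (by norm_num)
    have htend : Filter.Tendsto (fun k : ℕ => ((3:ℝ) * 6 ^ k)⁻¹ * Real.log 3)
        Filter.atTop (nhds 0) := by
      simpa using h1.inv_tendsto_atTop.mul_const (Real.log 3)
    filter_upwards [htend.eventually (gt_mem_nhds hε)] with k hk p
    set a := ‖p.2‖ with ha_def
    set b := ‖p.1‖ with hb_def
    have ha : 0 ≤ a := norm_nonneg _
    have hb : 0 ≤ b := norm_nonneg _
    set A := a ^ (6 * 6 ^ k) with hA_def
    set B := b ^ (4 * 6 ^ k) with hB_def
    have hA : 0 ≤ A := pow_nonneg ha _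
    have hB : 0 ≤ B := pow_nonneg hb _
    set N : ℝ := (3:ℝ) * 6 ^ k with hN_def
    have hN : 0 < N := by positivity
    have hg : max (logPlus (a ^ 2)) (2 / 3 * logPlus (b ^ 2)) =
        N⁻¹ * Real.log (max 1 (max A B)) := by
      rw [← lp_eq_log_max (le_trans hA (le_max_left _ _)),
        lp_max hA hB, hA_def, hB_def, lp_pow, lp_pow, lp_pow, lp_pow,
        mul_max_of_nonneg _ _ (inv_nonneg.2 hN.le)]
      congr 1 <;> push_cast <;> field_simp <;> ring
    rw [Real.dist_eq, hg]
    set M : ℝ := max 1 (max A B) with hM_def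
    have hM1 : (1:ℝ) ≤ M := le_max_left _ _
    have hMA : A ≤ M := le_trans (le_max_left _ _) (le_max_right _ _)
    have hMB : B ≤ M := le_trans (le_max_right _ _) (le_max_right _ _)
    have hle1 : M ≤ 1 + A + B := by
      apply max_le (by linarith) (max_le (by linarith) (by linarith))
    have hle2 : 1 + A + B ≤ 3 * M := by linarith
    have hS : (0:ℝ) < 1 + A + B := by linarith
    have hlogge : Real.log M ≤ Real.log (1 + A + B) := Real.log_le_log (by linarith) hle1
    have hlogle : Real.log (1 + A + B) ≤ Real.log 3 + Real.log M := by
      rw [← Real.log_mul (by norm_num) (by linarith)]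
      exact Real.log_le_log hS hle2
    have habs : |N⁻¹ * Real.log M - N⁻¹ * Real.log (1 + A + B)| =
        N⁻¹ * (Real.log (1 + A + B) - Real.log M) := by
      rw [abs_sub_comm, ← mul_sub,
        abs_of_nonneg (mul_nonneg (inv_nonneg.2 hN.le) (sub_nonneg.2 hlogge))]
    calc |N⁻¹ * Real.log M - N⁻¹ * Real.log (1 + A + B)|
        = N⁻¹ * (Real.log (1 + A + B) - Real.log M) := habs
      _ ≤ N⁻¹ * Real.log 3 :=
          mul_le_mul_of_nonneg_left (by linarith) (inv_nonneg.2 hN.le)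
      _ < ε := hk
end
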